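/- Let C be a small category with Grothendieck topology J and τ : C ⥤ T a functor into a small category T, and let C' be a small category with Grothendieck topology J' and τ' : C' ⥤ T' a functor into a small category T'. Let G : T ⥤ T' be a functor such that for every Linton model M' of τ', the presheaf M' ∘ G^op (i.e., t ↦ M'(G t)) is a Linton model of τ. Then the induced restriction functor Mod^{T'} ⥤ Mod^T given by precomposition with G admits a left adjoint. -/

import Mathlib

open CategoryTheory

open Limits Opposite

universe u

section Lim
variable {C : Type u} [SmallCategory C] (J : GrothendieckTopology C)
  {T : Type u} [SmallCategory T] (τ : C ⥤ T)

/-- Linton models are closed under limits of presheaves. -/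
theorem linton_closed (K : Type u) [SmallCategory K] :
    ∀ {D : K ⥤ (Tᵒᵖ ⥤ Type u)} {c : Cone D}, IsLimit c →
      (∀ k, Presieve.IsSheaf J (τ.op ⋙ D.obj k)) → Presieve.IsSheaf J (τ.op ⋙ c.pt) := by
  intro D c hc hD
  let W := (Functor.whiskeringLeft Cᵒᵖ Tᵒᵖ (Type u)).obj τ.op
  have hc' : IsLimit (W.mapCone c) := isLimitOfPreserves W hc
  let D' : K ⥤ Sheaf J (Type u) :=
    { obj := fun k => ⟨τ.op ⋙ D.obj k, ((isSheaf_iff_isSheaf_of_type J _)).mpr (hD k)⟩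
      map := fun f => ObjectProperty.homMk (Functor.whiskerLeft τ.op (D.map f)) }
  have := Sheaf.isSheaf_of_isLimit (J := J) (D := Type u) D' (E := W.mapCone c) hc'
  rw [isSheaf_iff_isSheaf_of_type] at this
  exact this

instance linton_closed' (K : Type u) [SmallCategory K] :
    ObjectProperty.IsClosedUnderLimitsOfShape
      (fun M : Tᵒᵖ ⥤ Type u => Presieve.IsSheaf J (τ.op ⋙ M)) K :=
  ⟨fun _ ⟨pres⟩ => linton_closed J τ K pres.isLimit pres.prop_diag_obj⟩

instance linton_hasLimits :
    HasLimits (ObjectProperty.FullSubcategory (fun M : Tᵒᵖ ⥤ Type u => Presieve.IsSheaf J (τ.op ⋙ M))) :=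
  { has_limits_of_shape := fun K => hasLimitsOfShape_of_closedUnderLimits K _ }

end Lim

namespace LintonAux

variable {C' : Type u} [SmallCategory C'] (J' : GrothendieckTopology C')
  {T : Type u} [SmallCategory T]
  {T' : Type u} [SmallCategory T'] (τ' : C' ⥤ T')
  (G : T ⥤ T') (M : Tᵒᵖ ⥤ Type u)

/-- Formal terms generating the submodel of a Linton model `N'` generated by the image
of a morphism `M ⟶ G.op ⋙ N'`. -/
inductive Tm : T' → Type u
  | base (t : T) {t' : T'} (f : t' ⟶ G.obj t) (x : M.obj (op t)) : Tm t'
  | map {t' s : T'} (f : s ⟶ t') (a : Tm t') : Tm s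
  | amalg (c' : C') (R : Sieve c') (hR : R ∈ J' c')
      (fam : ∀ ⦃d : C'⦄ (f : d ⟶ c'), R f → Tm (τ'.obj d)) : Tm (τ'.obj c')

variable {N' : T'ᵒᵖ ⥤ Type u} (h : M ⟶ G.op ⋙ N')

/-- Evaluation of terms in `N'`. -/
def Ev : ∀ {t' : T'}, Tm J' τ' G M t' → N'.obj (op t') → Prop
  | _, .base t f x, v => v = N'.map f.op (h.app (op t) x)
  | _, .map f a, v => ∃ u, Ev a u ∧ v = N'.map f.op u
  | _, .amalg c' _ _ fam, v =>
      ∀ ⦃d : C'⦄ (f : d ⟶ c') (hf : _), Ev (fam f hf) (N'.map (τ'.map f).op v)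

theorem Ev_unique (hN' : Presieve.IsSheaf J' (τ'.op ⋙ N')) : ∀ {t' : T'} (a : Tm J' τ' G M t') {u v : N'.obj (op t')},
    Ev J' τ' G M h a u → Ev J' τ' G M h a v → u = v
  | _, .base t f x, u, v, hu, hv => by rw [hu, hv]
  | _, .map f a, u, v, hu, hv => by
      obtain ⟨u', hu', rfl⟩ := hu
      obtain ⟨v', hv', rfl⟩ := hv
      rw [Ev_unique hN' a hu' hv']
  | _, .amalg c' R hR fam, u, v, hu, hv => by
      have hsep : Presieve.IsSeparatedFor (τ'.op ⋙ N') R.arrows := (hN' R hR).isSeparatedFor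
      exact hsep (fun d f hf => N'.map (τ'.map f).op u) u v (fun d f hf => rfl)
        (fun d f hf => Ev_unique hN' (fam f hf) (hv f hf) (hu f hf))

end LintonAux

namespace LintonAux

variable {C' : Type u} [SmallCategory C'] (J' : GrothendieckTopology C')
  {T : Type u} [SmallCategory T]
  {T' : Type u} [SmallCategory T'] (τ' : C' ⥤ T')
  (G : T ⥤ T') (M : Tᵒᵖ ⥤ Type u)

/-- The data of a partial equivalence relation on terms, from which a candidate
model and a morphism from `M` into its restriction can be constructed. -/
structure Datum where
  rel : ∀ {t' : T'}, Tm J' τ' G M t' → Tm J' τ' G M t' → Prop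
  symm : ∀ {t'} {a b : Tm J' τ' G M t'}, rel a b → rel b a
  trans : ∀ {t'} {a b c : Tm J' τ' G M t'}, rel a b → rel b c → rel a c
  map_rel : ∀ {t' s} (f : s ⟶ t') {a b : Tm J' τ' G M t'}, rel a b → rel (.map f a) (.map f b)
  map_id : ∀ {t'} {a : Tm J' τ' G M t'}, rel a a → rel (.map (𝟙 t') a) a
  map_comp : ∀ {t' s r} (f : s ⟶ t') (g : r ⟶ s) {a : Tm J' τ' G M t'},
      rel a a → rel (.map g (.map f a)) (.map (g ≫ f) a)
  base_refl : ∀ (t : T) {t'} (f : t' ⟶ G.obj t) (x : M.obj (op t)),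
      rel (.base t f x) (.base t f x)
  base_map : ∀ (t : T) {t' s} (f : t' ⟶ G.obj t) (g : s ⟶ t') (x : M.obj (op t)),
      rel (.map g (.base t f x)) (.base t (g ≫ f) x)
  base_nat : ∀ {t u : T} (g : t ⟶ u) (x : M.obj (op u)),
      rel (.base u (G.map g) x) (.base t (𝟙 (G.obj t)) (M.map g.op x))

variable {J' τ' G M}

/-- The underlying sets of the candidate model. -/
def Datum.carrier (d : Datum J' τ' G M) (t' : T') : Type u :=
  Quot (fun a b : {x : Tm J' τ' G M t' // d.rel x x} => d.rel a.1 b.1)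

theorem Datum.sound (d : Datum J' τ' G M) {t' : T'}
    (a b : {x : Tm J' τ' G M t' // d.rel x x}) (hab : d.rel a.1 b.1) :
    (Quot.mk _ a : d.carrier t') = Quot.mk _ b :=
  Quot.sound hab

/-- The candidate model associated to a datum. -/
def Datum.functor (d : Datum J' τ' G M) : T'ᵒᵖ ⥤ Type u where
  obj X := d.carrier X.unop
  map {X Y} f := TypeCat.ofHom (Quot.map (fun a => ⟨.map f.unop a.1, d.map_rel _ a.2⟩)
    (fun a b hab => d.map_rel _ hab))
  map_id X := by
    ext q
    obtain ⟨a⟩ := q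
    exact d.sound _ _ (d.map_id a.2)
  map_comp {X Y Z} f g := by
    ext q
    obtain ⟨a⟩ := q
    exact (d.sound _ _ (d.map_comp f.unop g.unop a.2)).symm

/-- The canonical morphism from `M` to the restriction of the candidate model. -/
def Datum.unit (d : Datum J' τ' G M) : M ⟶ G.op ⋙ d.functor where
  app X := TypeCat.ofHom fun x => Quot.mk _ ⟨.base X.unop (𝟙 (G.obj X.unop)) x, d.base_refl _ _ _⟩
  naturality X Y g := by
    ext x
    have h1 := d.base_map X.unop (𝟙 (G.obj X.unop)) (G.map g.unop) x
    rw [Category.comp_id] at h1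
    have h2 := d.base_nat g.unop x
    exact (Datum.sound d _ _ (d.trans h1 h2)).symm

end LintonAux

namespace LintonAux

variable {C' : Type u} [SmallCategory C'] {J' : GrothendieckTopology C'}
  {T : Type u} [SmallCategory T]
  {T' : Type u} [SmallCategory T'] {τ' : C' ⥤ T'}
  {G : T ⥤ T'} {M : Tᵒᵖ ⥤ Type u}
  {N' : T'ᵒᵖ ⥤ Type u} (hN' : Presieve.IsSheaf J' (τ'.op ⋙ N')) (h : M ⟶ G.op ⋙ N')

/-- The datum associated to a morphism `h : M ⟶ G.op ⋙ N'`. -/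
def evDatum : Datum J' τ' G M where
  rel a b := ∃ s, Ev J' τ' G M h a s ∧ Ev J' τ' G M h b s
  symm := fun ⟨s, h1, h2⟩ => ⟨s, h2, h1⟩
  trans := fun ⟨s, h1, h2⟩ ⟨s', h3, h4⟩ =>
    ⟨s, h1, by rwa [Ev_unique J' τ' G M h hN' _ h2 h3]⟩
  map_rel := by
    rintro t' s' f a b ⟨s, h1, h2⟩
    exact ⟨N'.map f.op s, ⟨s, h1, rfl⟩, ⟨s, h2, rfl⟩⟩
  map_id := by
    rintro t' a ⟨s, h1, -⟩
    exact ⟨s, ⟨s, h1, by simp⟩, h1⟩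
  map_comp := by
    rintro t' s' r f g a ⟨s, h1, -⟩
    exact ⟨N'.map (g ≫ f).op s, ⟨N'.map f.op s, ⟨s, h1, rfl⟩, by simp⟩, ⟨s, h1, rfl⟩⟩
  base_refl := by
    intro t t' f x
    exact ⟨N'.map f.op (h.app (op t) x), rfl, rfl⟩
  base_map := by
    intro t t' s' f g x
    exact ⟨N'.map (g ≫ f).op (h.app (op t) x), ⟨N'.map f.op (h.app (op t) x), rfl, by simp⟩, rfl⟩
  base_nat := by
    intro t u g x
    refine ⟨N'.map (G.map g).op (h.app (op u) x), rfl, ?_⟩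
    show N'.map (G.map g).op (h.app (op u) x)
        = N'.map (𝟙 (G.obj t)).op (h.app (op t) (M.map g.op x))
    have := ConcreteCategory.congr_hom (h.naturality g.op) x
    simp only [types_comp_apply, Functor.comp_map, Functor.op_map] at this
    simp [this]

/-- The submodel of `N'` generated by the image of `h`. -/
def Kfunctor : T'ᵒᵖ ⥤ Type u where
  obj X := {s : N'.obj X // ∃ a : Tm J' τ' G M X.unop, Ev J' τ' G M h a s}
  map {X Y} f := TypeCat.ofHom fun a => ⟨N'.map f a.1, a.2.elim fun tm htm => ⟨.map f.unop tm, ⟨a.1, htm, rfl⟩⟩⟩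
  map_id X := by ext a; simp
  map_comp f g := by ext a; simp

include hN' in
theorem K_isSheaf : Presieve.IsSheaf J' (τ'.op ⋙ Kfunctor (J' := J') (τ' := τ') h) := by
  intro X S hS x hx
  let x' : Presieve.FamilyOfElements (τ'.op ⋙ N') S.arrows := fun Y f hf => (x f hf).1
  have hx' : x'.Compatible := by
    intro Y₁ Y₂ Z g₁ g₂ f₁ f₂ h₁ h₂ hcomm
    exact congrArg Subtype.val (hx g₁ g₂ h₁ h₂ hcomm)
  obtain ⟨s, hs, huniq⟩ := hN' S hS x' hx'
  have hfam : ∀ ⦃d : C'⦄ (f : d ⟶ X) (hf : S f), ∃ tm, Ev J' τ' G M h tm (x f hf).1 :=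
    fun d f hf => (x f hf).2
  refine ⟨⟨s, Tm.amalg X S hS (fun d f hf => (hfam f hf).choose), ?_⟩, ?_, ?_⟩
  · intro d f hf
    have : N'.map (τ'.map f).op s = (x f hf).1 := hs f hf
    rw [this]
    exact (hfam f hf).choose_spec
  · intro Y f hf
    exact Subtype.ext (hs f hf)
  · intro t ht
    exact Subtype.ext (huniq t.1 (fun Y f hf => congrArg Subtype.val (ht f hf)))

end LintonAux

namespace LintonAux

variable {C' : Type u} [SmallCategory C'] {J' : GrothendieckTopology C'}
  {T : Type u} [SmallCategory T]
  {T' : Type u} [SmallCategory T'] {τ' : C' ⥤ T'}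
  {G : T ⥤ T'} {M : Tᵒᵖ ⥤ Type u}
  {N' : T'ᵒᵖ ⥤ Type u} (hN' : Presieve.IsSheaf J' (τ'.op ⋙ N')) (h : M ⟶ G.op ⋙ N')

theorem choose_eq {t' : T'} (a : {x : Tm J' τ' G M t' // (evDatum hN' h).rel x x})
    {s : N'.obj (op t')} (hs : Ev J' τ' G M h a.1 s) : a.2.choose = s :=
  Ev_unique J' τ' G M h hN' a.1 a.2.choose_spec.1 hs

/-- The comparison map from the quotient model to the submodel `K`. -/
noncomputable def toK : (evDatum hN' h).functor ⟶ Kfunctor (J' := J') (τ' := τ') h where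
  app X := TypeCat.ofHom (Quot.lift (fun a => ⟨a.2.choose, a.1, a.2.choose_spec.1⟩)
    (by
      rintro a b ⟨s, ha, hb⟩
      exact Subtype.ext ((choose_eq hN' h a ha).trans (choose_eq hN' h b hb).symm)))
  naturality X Y f := by
    ext q
    obtain ⟨a⟩ := q
    apply Subtype.ext
    exact choose_eq hN' h _ ⟨a.2.choose, a.2.choose_spec.1, rfl⟩

theorem toK_bijective (X : T'ᵒᵖ) : Function.Bijective ((toK hN' h).app X) := by
  constructor
  · rintro ⟨a⟩ ⟨b⟩ hab
    have := congrArg Subtype.val hab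
    apply Quot.sound
    refine ⟨a.2.choose, a.2.choose_spec.1, ?_⟩
    have h2 : a.2.choose = b.2.choose := this
    rw [h2]
    exact b.2.choose_spec.1
  · rintro ⟨s, tm, htm⟩
    refine ⟨Quot.mk _ ⟨tm, ⟨s, htm, htm⟩⟩, ?_⟩
    exact Subtype.ext (choose_eq hN' h _ htm)

end LintonAux

namespace LintonAux

variable {C' : Type u} [SmallCategory C'] {J' : GrothendieckTopology C'}
  {T : Type u} [SmallCategory T]
  {T' : Type u} [SmallCategory T'] {τ' : C' ⥤ T'}
  {G : T ⥤ T'} {M : Tᵒᵖ ⥤ Type u}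
  {N' : T'ᵒᵖ ⥤ Type u} (hN' : Presieve.IsSheaf J' (τ'.op ⋙ N')) (h : M ⟶ G.op ⋙ N')

theorem evDatum_isSheaf : Presieve.IsSheaf J' (τ'.op ⋙ (evDatum hN' h).functor) := by
  haveI : ∀ X, IsIso ((toK hN' h).app X) :=
    fun X => (isIso_iff_bijective _).mpr (toK_bijective hN' h X)
  haveI : IsIso (toK hN' h) := NatIso.isIso_of_isIso_app _
  exact Presieve.isSheaf_iso J' (Functor.isoWhiskerLeft τ'.op (asIso (toK hN' h)).symm) (K_isSheaf hN' h)

/-- The factorization of `h` through the quotient model. -/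
noncomputable def factor : (evDatum hN' h).functor ⟶ N' :=
  toK hN' h ≫ { app := fun X => TypeCat.ofHom fun a => a.1, naturality := fun X Y f => rfl }

theorem factor_spec : (evDatum hN' h).unit ≫ Functor.whiskerLeft G.op (factor hN' h) = h := by
  ext X x
  refine choose_eq hN' h _ ?_
  show h.app X x = N'.map (𝟙 (G.obj X.unop)).op (h.app (op X.unop) x)
  simp

end LintonAux


/-- Given Linton theories `τ : C ⥤ T` (over the site `(C, J)`) and
`τ' : C' ⥤ T'` (over the site `(C', J')`), and a functor `G : T ⥤ T'` such that
precomposition with `G` sends Linton models of `τ'` to Linton models of `τ`, the induced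
restriction functor between the categories of Linton models admits a left adjoint. -/
theorem linton_restriction_has_left_adjoint
    {C : Type u} [SmallCategory C] (J : GrothendieckTopology C)
    {T : Type u} [SmallCategory T] (τ : C ⥤ T)
    {C' : Type u} [SmallCategory C'] (J' : GrothendieckTopology C')
    {T' : Type u} [SmallCategory T'] (τ' : C' ⥤ T')
    (G : T ⥤ T')
    (h : ∀ M' : T'ᵒᵖ ⥤ Type u, Presieve.IsSheaf J' (τ'.op ⋙ M') →
      Presieve.IsSheaf J (τ.op ⋙ (G.op ⋙ M'))) :
    (ObjectProperty.lift (fun M : Tᵒᵖ ⥤ Type u => Presieve.IsSheaf J (τ.op ⋙ M))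
      (ObjectProperty.ι (fun M' : T'ᵒᵖ ⥤ Type u => Presieve.IsSheaf J' (τ'.op ⋙ M')) ⋙
        (Functor.whiskeringLeft Tᵒᵖ T'ᵒᵖ (Type u)).obj G.op)
      (fun M' => h M'.obj M'.property)).IsRightAdjoint := by
  set P : (Tᵒᵖ ⥤ Type u) → Prop := fun M => Presieve.IsSheaf J (τ.op ⋙ M) with hP
  set P' : (T'ᵒᵖ ⥤ Type u) → Prop := fun M' => Presieve.IsSheaf J' (τ'.op ⋙ M') with hP'
  set F := ObjectProperty.lift P
      (ObjectProperty.ι P' ⋙ (Functor.whiskeringLeft Tᵒᵖ T'ᵒᵖ (Type u)).obj G.op)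
      (fun M' => h M'.obj M'.property) with hF
  haveI : HasLimits (ObjectProperty.FullSubcategory P') := linton_hasLimits J' τ'
  haveI : CreatesLimitsOfSize.{u, u} (ObjectProperty.ι P') :=
    { CreatesLimitsOfShape := fun {K} _ =>
        by haveI := linton_closed' J' τ' K; exact createsLimitsOfShapeFullSubcategoryInclusion K P' }
  haveI : PreservesLimitsOfSize.{u, u} (ObjectProperty.ι P') :=
    preservesLimits_of_createsLimits_and_hasLimits _
  haveI : ReflectsLimitsOfSize.{u, u} (ObjectProperty.ι P) :=
    fullyFaithful_reflectsLimits _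
  haveI : PreservesLimitsOfSize.{u, u} (F ⋙ ObjectProperty.ι P) :=
    preservesLimits_of_natIso (ObjectProperty.liftCompιIso P _ _).symm
  haveI : PreservesLimitsOfSize.{u, u} F :=
    preservesLimits_of_reflects_of_preserves F (ObjectProperty.ι P)
  apply isRightAdjoint_of_preservesLimits_of_solutionSetCondition
  intro A
  refine ⟨{d : LintonAux.Datum J' τ' G A.obj // Presieve.IsSheaf J' (τ'.op ⋙ d.functor)},
    fun i => ⟨i.1.functor, i.2⟩, fun i => ObjectProperty.homMk i.1.unit, ?_⟩
  intro X hX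
  refine ⟨⟨LintonAux.evDatum X.property hX.hom, LintonAux.evDatum_isSheaf X.property hX.hom⟩,
    ObjectProperty.homMk (LintonAux.factor X.property hX.hom), ?_⟩
  exact ObjectProperty.hom_ext _ (LintonAux.factor_spec X.property hX.hom)
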